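/- Let G = (X, Y, u) be a continuous zero-sum game, and let (p_i*, q_i*, x_{i+1}, y_{i+1}) be an infinite sequence of iterates of the double oracle algorithm. Suppose along a subsequence p_i* ⇒ p* and q_i* ⇒ q* weakly. Then (p*, q*) is an equilibrium of G, i.e., U(x, q*) ≤ U(p*, q*) ≤ U(p*, y) for all x ∈ X, y ∈ Y. -/

import Mathlib

open MeasureTheory Filter Topology

section Aux

lemma aux_bound {γ : Type*} [TopologicalSpace γ] [CompactSpace γ] {u : γ → ℝ}
    (hu : Continuous u) : ∃ C : ℝ, ∀ z, ‖u z‖ ≤ C := by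
  obtain ⟨C, hC⟩ := (isCompact_range hu).isBounded.exists_norm_le
  exact ⟨C, fun z => hC _ (Set.mem_range_self z)⟩

lemma aux_integrable {γ : Type*} [TopologicalSpace γ] [CompactSpace γ] [MeasurableSpace γ]
    [OpensMeasurableSpace γ] {u : γ → ℝ} (hu : Continuous u) (μ : Measure γ)
    [IsFiniteMeasure μ] : Integrable u μ := by
  obtain ⟨C, hC⟩ := aux_bound hu
  exact (integrable_const C).mono' hu.aestronglyMeasurable (Eventually.of_forall hC)

variable {α β : Type*} [MetricSpace α] [CompactSpace α] [MeasurableSpace α] [BorelSpace α]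
  [MetricSpace β] [CompactSpace β] [MeasurableSpace β] [BorelSpace β]
  {u : α × β → ℝ}

lemma aux_int_prod (hu : Continuous u) (p : Measure α) (q : Measure β)
    (hp : IsProbabilityMeasure p) (hq : IsProbabilityMeasure q) :
    Integrable u (p.prod q) := by
  haveI := hp; haveI := hq
  exact aux_integrable hu _

lemma fub (hu : Continuous u) (p : Measure α) (q : Measure β)
    (hp : IsProbabilityMeasure p) (hq : IsProbabilityMeasure q) :
    ∫ z, u z ∂(p.prod q) = ∫ x, ∫ y, u (x, y) ∂q ∂p := by
  haveI := hp; haveI := hq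
  exact integral_prod u (aux_int_prod hu p q hp hq)

lemma fub_symm (hu : Continuous u) (p : Measure α) (q : Measure β)
    (hp : IsProbabilityMeasure p) (hq : IsProbabilityMeasure q) :
    ∫ z, u z ∂(p.prod q) = ∫ y, ∫ x, u (x, y) ∂p ∂q := by
  haveI := hp; haveI := hq
  exact integral_prod_symm u (aux_int_prod hu p q hp hq)

lemma fub_dirac_left (hu : Continuous u) (x : α) (q : Measure β)
    (hq : IsProbabilityMeasure q) :
    ∫ z, u z ∂((Measure.dirac x).prod q) = ∫ y, u (x, y) ∂q := by
  rw [fub hu _ _ inferInstance hq]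
  exact integral_dirac (fun x' => ∫ y, u (x', y) ∂q) x

lemma fub_dirac_right (hu : Continuous u) (p : Measure α) (y : β)
    (hp : IsProbabilityMeasure p) :
    ∫ z, u z ∂(p.prod (Measure.dirac y)) = ∫ x, u (x, y) ∂p := by
  rw [fub_symm hu _ _ hp inferInstance]
  exact integral_dirac (fun y' => ∫ x, u (x, y') ∂p) y

lemma cont_F (hu : Continuous u) (q : Measure β) [IsFiniteMeasure q] :
    Continuous fun x => ∫ y, u (x, y) ∂q := by
  obtain ⟨C, hC⟩ := aux_bound hu
  refine continuous_of_dominated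
    (fun x => ((hu.comp (by fun_prop : Continuous fun y : β => ((x, y) : α × β)))).aestronglyMeasurable)
    (fun x => Eventually.of_forall fun y => hC (x, y)) (integrable_const C)
    (Eventually.of_forall fun y => ?_)
  exact hu.comp (by fun_prop : Continuous fun x : α => ((x, y) : α × β))

lemma unif_conv (hu : Continuous u) (qs : ℕ → Measure β)
    (hqs : ∀ i, IsProbabilityMeasure (qs i)) (qstar : Measure β)
    (hq : IsProbabilityMeasure qstar)
    (hconv : ∀ g : β → ℝ, Continuous g →
      Tendsto (fun i => ∫ y, g y ∂(qs i)) atTop (𝓝 (∫ y, g y ∂qstar))) :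
    TendstoUniformly (fun i x => ∫ y, u (x, y) ∂(qs i)) (fun x => ∫ y, u (x, y) ∂qstar) atTop := by
  haveI := hq
  rw [Metric.tendstoUniformly_iff]
  intro ε hε
  have hu' := CompactSpace.uniformContinuous_of_continuous (α := α × β) hu
  rw [Metric.uniformContinuous_iff] at hu'
  obtain ⟨δ, hδ, hδ'⟩ := hu' (ε / 3) (by linarith)
  obtain ⟨t, ht⟩ := isCompact_univ.elim_finite_subcover (fun c : α => Metric.ball c δ)
    (fun _ => Metric.isOpen_ball) (fun x _ => Set.mem_iUnion.2 ⟨x, Metric.mem_ball_self hδ⟩)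
  have key : ∀ (q' : Measure β), IsProbabilityMeasure q' → ∀ x c : α, dist x c < δ →
      dist (∫ y, u (x, y) ∂q') (∫ y, u (c, y) ∂q') ≤ ε / 3 := by
    intro q' hq' x c hxc
    haveI := hq'
    have hix : Integrable (fun y => u (x, y)) q' :=
      aux_integrable (hu.comp (by fun_prop : Continuous fun y : β => ((x, y) : α × β))) q'
    have hic : Integrable (fun y => u (c, y)) q' :=
      aux_integrable (hu.comp (by fun_prop : Continuous fun y : β => ((c, y) : α × β))) q'
    rw [dist_eq_norm, ← integral_sub hix hic]
    calc ‖∫ y, (u (x, y) - u (c, y)) ∂q'‖ ≤ (ε / 3) * (q' Set.univ).toReal := by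
          refine norm_integral_le_of_norm_le_const (Eventually.of_forall fun y => ?_)
          have hd : dist ((x, y) : α × β) ((c, y) : α × β) < δ := by
            rw [Prod.dist_eq]
            exact max_lt hxc (by simpa [dist_self] using hδ)
          have := hδ' hd
          rw [Real.norm_eq_abs, ← Real.dist_eq]
          exact this.le
      _ = ε / 3 := by simp
  have hev : ∀ᶠ i in atTop, ∀ c ∈ t,
      dist (∫ y, u (c, y) ∂qstar) (∫ y, u (c, y) ∂(qs i)) < ε / 3 := by
    rw [eventually_all_finset]
    intro c _
    have h1 := hconv (fun y => u (c, y))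
      (hu.comp (by fun_prop : Continuous fun y : β => ((c, y) : α × β)))
    have h2 : Tendsto (fun i => dist (∫ y, u (c, y) ∂qstar) (∫ y, u (c, y) ∂(qs i)))
        atTop (𝓝 0) := by
      have := Tendsto.dist (tendsto_const_nhds
        (x := ∫ y, u (c, y) ∂qstar) (f := atTop)) h1
      simpa using this
    exact h2.eventually_lt_const (by linarith)
  filter_upwards [hev] with i hi x
  have hx : x ∈ ⋃ c ∈ t, Metric.ball c δ := ht (Set.mem_univ x)
  obtain ⟨c, hct, hxc⟩ := Set.mem_iUnion₂.1 hx
  rw [Metric.mem_ball] at hxc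
  have h1 := key qstar hq x c hxc
  have h2 := hi c hct
  have h3 := key (qs i) (hqs i) c x (by rwa [dist_comm])
  calc dist (∫ y, u (x, y) ∂qstar) (∫ y, u (x, y) ∂(qs i))
      ≤ dist (∫ y, u (x, y) ∂qstar) (∫ y, u (c, y) ∂qstar)
        + dist (∫ y, u (c, y) ∂qstar) (∫ y, u (c, y) ∂(qs i))
        + dist (∫ y, u (c, y) ∂(qs i)) (∫ y, u (x, y) ∂(qs i)) := dist_triangle4 _ _ _ _
    _ < ε := by
        have h3' : dist (∫ y, u (c, y) ∂(qs i)) (∫ y, u (x, y) ∂(qs i)) ≤ ε / 3 := h3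
        linarith

lemma prod_conv (hu : Continuous u) (ps : ℕ → Measure α) (qs : ℕ → Measure β)
    (hps : ∀ i, IsProbabilityMeasure (ps i)) (hqs : ∀ i, IsProbabilityMeasure (qs i))
    (pstar : Measure α) (qstar : Measure β)
    (hp : IsProbabilityMeasure pstar) (hq : IsProbabilityMeasure qstar)
    (hpconv : ∀ f : α → ℝ, Continuous f →
      Tendsto (fun i => ∫ x, f x ∂(ps i)) atTop (𝓝 (∫ x, f x ∂pstar)))
    (hqconv : ∀ g : β → ℝ, Continuous g →
      Tendsto (fun i => ∫ y, g y ∂(qs i)) atTop (𝓝 (∫ y, g y ∂qstar))) :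
    Tendsto (fun i => ∫ z, u z ∂((ps i).prod (qs i))) atTop
      (𝓝 (∫ z, u z ∂(pstar.prod qstar))) := by
  haveI := hp; haveI := hq
  have hFc : Continuous fun x => ∫ y, u (x, y) ∂qstar := cont_F hu qstar
  have hUnif := unif_conv hu qs hqs qstar hq hqconv
  rw [Metric.tendsto_atTop]
  intro ε hε
  have h1 := (Metric.tendstoUniformly_iff.1 hUnif) (ε / 2) (by linarith)
  have h2 : ∀ᶠ i in atTop,
      dist (∫ x, (∫ y, u (x, y) ∂qstar) ∂(ps i)) (∫ x, (∫ y, u (x, y) ∂qstar) ∂pstar) < ε / 2 := by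
    have h3 := hpconv _ hFc
    have h4 : Tendsto (fun i => dist (∫ x, (∫ y, u (x, y) ∂qstar) ∂(ps i))
        (∫ x, (∫ y, u (x, y) ∂qstar) ∂pstar)) atTop (𝓝 0) := by
      have := Tendsto.dist h3 (tendsto_const_nhds
        (x := ∫ x, (∫ y, u (x, y) ∂qstar) ∂pstar) (f := atTop))
      simpa using this
    exact h4.eventually_lt_const (by linarith)
  obtain ⟨N, hN⟩ := eventually_atTop.1 (h1.and h2)
  refine ⟨N, fun i hi => ?_⟩
  obtain ⟨hNi1, hNi2⟩ := hN i hi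
  haveI := hps i; haveI := hqs i
  rw [fub hu (ps i) (qs i) (hps i) (hqs i), fub hu pstar qstar hp hq]
  have hF_i : Continuous fun x => ∫ y, u (x, y) ∂(qs i) := cont_F hu (qs i)
  have key : dist (∫ x, (∫ y, u (x, y) ∂(qs i)) ∂(ps i))
      (∫ x, (∫ y, u (x, y) ∂qstar) ∂(ps i)) ≤ ε / 2 := by
    rw [dist_eq_norm, ← integral_sub (aux_integrable hF_i _) (aux_integrable hFc _)]
    calc ‖∫ x, ((∫ y, u (x, y) ∂(qs i)) - ∫ y, u (x, y) ∂qstar) ∂(ps i)‖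
        ≤ (ε / 2) * ((ps i) Set.univ).toReal := by
          refine norm_integral_le_of_norm_le_const (Eventually.of_forall fun x => ?_)
          rw [Real.norm_eq_abs, ← Real.dist_eq, dist_comm]
          exact (hNi1 x).le
      _ = ε / 2 := by simp
  calc dist (∫ x, (∫ y, u (x, y) ∂(qs i)) ∂(ps i)) (∫ x, (∫ y, u (x, y) ∂qstar) ∂pstar)
      ≤ dist (∫ x, (∫ y, u (x, y) ∂(qs i)) ∂(ps i)) (∫ x, (∫ y, u (x, y) ∂qstar) ∂(ps i))
        + dist (∫ x, (∫ y, u (x, y) ∂qstar) ∂(ps i)) (∫ x, (∫ y, u (x, y) ∂qstar) ∂pstar) :=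
        dist_triangle _ _ _
    _ < ε := by linarith

lemma main_half (u : α × β → ℝ) (hu : Continuous u)
    (A : ℕ → Finset α) (ps : ℕ → Measure α) (qs : ℕ → Measure β)
    (hps : ∀ i, IsProbabilityMeasure (ps i)) (hqs : ∀ i, IsProbabilityMeasure (qs i))
    (hsub : ∀ i, ∀ x ∈ A i,
      ∫ z, u z ∂((Measure.dirac x).prod (qs i)) ≤ ∫ z, u z ∂((ps i).prod (qs i)))
    (xseq : ℕ → α)
    (hx : ∀ i, ∀ x : α, ∫ z, u z ∂((Measure.dirac x).prod (qs i)) ≤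
      ∫ z, u z ∂((Measure.dirac (xseq i)).prod (qs i)))
    (hrec : ∀ i, (↑(A (i + 1)) : Set α) = insert (xseq i) ↑(A i))
    (φ : ℕ → ℕ) (hφ : StrictMono φ)
    (pstar : Measure α) (qstar : Measure β)
    (hp : IsProbabilityMeasure pstar) (hq : IsProbabilityMeasure qstar)
    (hpconv : ∀ f : α → ℝ, Continuous f →
      Tendsto (fun i => ∫ x, f x ∂(ps (φ i))) atTop (𝓝 (∫ x, f x ∂pstar)))
    (hqconv : ∀ g : β → ℝ, Continuous g →
      Tendsto (fun i => ∫ y, g y ∂(qs (φ i))) atTop (𝓝 (∫ y, g y ∂qstar))) :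
    ∀ x : α, ∫ z, u z ∂((Measure.dirac x).prod qstar) ≤ ∫ z, u z ∂(pstar.prod qstar) := by
  haveI := hp; haveI := hq
  intro x
  have hmono : ∀ i j, i ≤ j → (↑(A i) : Set α) ⊆ ↑(A j) := by
    intro i j hij
    induction j, hij using Nat.le_induction with
    | base => exact subset_rfl
    | succ k hk ih => rw [hrec k]; exact ih.trans (Set.subset_insert _ _)
  have hmem : ∀ i j, i < j → xseq i ∈ A j := by
    intro i j hij
    have h1 : xseq i ∈ (↑(A (i + 1)) : Set α) := by rw [hrec i]; exact Set.mem_insert _ _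
    exact Finset.mem_coe.1 (hmono (i + 1) j hij h1)
  obtain ⟨xb, -, ψ, hψ, hxb⟩ := isCompact_univ.tendsto_subseq
    (x := fun k => xseq (φ k)) (fun n => Set.mem_univ _)
  have hρ : StrictMono (fun k => φ (ψ k)) := hφ.comp hψ
  have hUnif : TendstoUniformly (fun i x => ∫ y, u (x, y) ∂(qs (φ i)))
      (fun x => ∫ y, u (x, y) ∂qstar) atTop :=
    unif_conv hu (fun i => qs (φ i)) (fun i => hqs (φ i)) qstar hq hqconv
  have hFc : Continuous fun x => ∫ y, u (x, y) ∂qstar := cont_F hu qstar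
  have comp_tendsto : ∀ (nn : ℕ → ℕ), Tendsto nn atTop atTop →
      ∀ (z : ℕ → α), Tendsto z atTop (𝓝 xb) →
      Tendsto (fun k => ∫ y, u (z k, y) ∂(qs (φ (nn k)))) atTop
        (𝓝 (∫ y, u (xb, y) ∂qstar)) := by
    intro nn hnn z hz
    have hUnif' : TendstoUniformly (fun k x => ∫ y, u (x, y) ∂(qs (φ (nn k))))
        (fun x => ∫ y, u (x, y) ∂qstar) atTop :=
      fun U hU => hnn.eventually (hUnif U hU)
    exact hUnif'.tendsto_comp hFc.continuousAt hz
  have step1 : ∫ y, u (x, y) ∂qstar ≤ ∫ y, u (xb, y) ∂qstar := by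
    have hle : ∀ k, ∫ y, u (x, y) ∂(qs (φ (ψ k))) ≤
        ∫ y, u (xseq (φ (ψ k)), y) ∂(qs (φ (ψ k))) := by
      intro k
      have h1 := hx (φ (ψ k)) x
      rwa [fub_dirac_left hu x _ (hqs _), fub_dirac_left hu _ _ (hqs _)] at h1
    refine le_of_tendsto_of_tendsto' (b := atTop) ?_ ?_ hle
    · have h1 := hqconv (fun y => u (x, y))
        (hu.comp (by fun_prop : Continuous fun y : β => ((x, y) : α × β)))
      exact h1.comp hψ.tendsto_atTop
    · exact comp_tendsto ψ hψ.tendsto_atTop _ hxb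
  have step2 : ∫ y, u (xb, y) ∂qstar ≤ ∫ z, u z ∂(pstar.prod qstar) := by
    have hle : ∀ k, ∫ y, u (xseq (φ (ψ k)), y) ∂(qs (φ (ψ (k + 1)))) ≤
        ∫ z, u z ∂((ps (φ (ψ (k + 1)))).prod (qs (φ (ψ (k + 1))))) := by
      intro k
      have hm : xseq (φ (ψ k)) ∈ A (φ (ψ (k + 1))) :=
        hmem _ _ (hρ (Nat.lt_succ_self k))
      have h1 := hsub (φ (ψ (k + 1))) _ hm
      rwa [fub_dirac_left hu _ _ (hqs _)] at h1
    refine le_of_tendsto_of_tendsto' (b := atTop) ?_ ?_ hle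
    · exact comp_tendsto (fun k => ψ (k + 1))
        (hψ.tendsto_atTop.comp (tendsto_add_atTop_nat 1)) _ hxb
    · have hprod := prod_conv hu (fun i => ps (φ i)) (fun i => qs (φ i))
        (fun i => hps _) (fun i => hqs _) pstar qstar hp hq hpconv hqconv
      exact hprod.comp (hψ.tendsto_atTop.comp (tendsto_add_atTop_nat 1))
  rw [fub_dirac_left hu x qstar hq]
  exact step1.trans step2

end Aux

/-- any weak limit of a subsequence of double oracle iterates is an
equilibrium of the full game. -/
theorem stmt_10 {m n : ℕ}
    (X : Set (EuclideanSpace ℝ (Fin m))) (Y : Set (EuclideanSpace ℝ (Fin n)))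
    (hXne : X.Nonempty) (hXc : IsCompact X) (hYne : Y.Nonempty) (hYc : IsCompact Y)
    (u : X × Y → ℝ) (hu : Continuous u)
    -- iterates of the double oracle algorithm
    (Xi : ℕ → Finset X) (Yi : ℕ → Finset Y)
    (hXi : ∀ i, (Xi i).Nonempty) (hYi : ∀ i, (Yi i).Nonempty)
    (ps : ℕ → Measure X) (qs : ℕ → Measure Y)
    (hpsprob : ∀ i, IsProbabilityMeasure (ps i)) (hqsprob : ∀ i, IsProbabilityMeasure (qs i))
    (hpssupp : ∀ i, ps i ((↑(Xi i) : Set X)ᶜ) = 0)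
    (hqssupp : ∀ i, qs i ((↑(Yi i) : Set Y)ᶜ) = 0)
    (hsub₁ : ∀ i, ∀ x ∈ Xi i,
      ∫ z, u z ∂((Measure.dirac x).prod (qs i)) ≤ ∫ z, u z ∂((ps i).prod (qs i)))
    (hsub₂ : ∀ i, ∀ y ∈ Yi i,
      ∫ z, u z ∂((ps i).prod (qs i)) ≤ ∫ z, u z ∂((ps i).prod (Measure.dirac y)))
    (xseq : ℕ → X) (yseq : ℕ → Y)
    (hx : ∀ i, ∀ x : X,
      ∫ z, u z ∂((Measure.dirac x).prod (qs i)) ≤ ∫ z, u z ∂((Measure.dirac (xseq i)).prod (qs i)))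
    (hy : ∀ i, ∀ y : Y,
      ∫ z, u z ∂((ps i).prod (Measure.dirac (yseq i))) ≤ ∫ z, u z ∂((ps i).prod (Measure.dirac y)))
    (hXrec : ∀ i, (↑(Xi (i + 1)) : Set X) = insert (xseq i) ↑(Xi i))
    (hYrec : ∀ i, (↑(Yi (i + 1)) : Set Y) = insert (yseq i) ↑(Yi i))
    -- a subsequence along which (ps, qs) converges weakly to (pstar, qstar)
    (φ : ℕ → ℕ) (hφ : StrictMono φ)
    (pstar : Measure X) (qstar : Measure Y)
    [IsProbabilityMeasure pstar] [IsProbabilityMeasure qstar]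
    (hpconv : ∀ f : X → ℝ, Continuous f →
      Tendsto (fun i => ∫ x, f x ∂(ps (φ i))) atTop (𝓝 (∫ x, f x ∂pstar)))
    (hqconv : ∀ g : Y → ℝ, Continuous g →
      Tendsto (fun i => ∫ y, g y ∂(qs (φ i))) atTop (𝓝 (∫ y, g y ∂qstar))) :
    -- (pstar, qstar) is an equilibrium of G
    (∀ x : X, ∫ z, u z ∂((Measure.dirac x).prod qstar) ≤ ∫ z, u z ∂(pstar.prod qstar)) ∧
    (∀ y : Y, ∫ z, u z ∂(pstar.prod qstar) ≤ ∫ z, u z ∂(pstar.prod (Measure.dirac y))) := by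
  haveI : CompactSpace X := isCompact_iff_compactSpace.mp hXc
  haveI : CompactSpace Y := isCompact_iff_compactSpace.mp hYc
  constructor
  · exact main_half u hu Xi ps qs hpsprob hqsprob hsub₁ xseq hx hXrec φ hφ pstar qstar
      inferInstance inferInstance hpconv hqconv
  · set v : Y × X → ℝ := fun z => -u (z.2, z.1) with hv
    have hvc : Continuous v := by fun_prop
    have swap : ∀ (p : Measure X) (q : Measure Y), IsProbabilityMeasure p →
        IsProbabilityMeasure q →
        ∫ z, v z ∂(q.prod p) = -∫ z, u z ∂(p.prod q) := by
      intro p q hp hq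
      haveI := hp; haveI := hq
      rw [fub hvc q p hq hp, fub_symm hu p q hp hq]
      simp [hv, integral_neg]
    have key := main_half v hvc Yi qs ps hqsprob hpsprob
      (fun i y hyi => by
        rw [swap (ps i) (Measure.dirac y) (hpsprob i) inferInstance,
          swap (ps i) (qs i) (hpsprob i) (hqsprob i)]
        exact neg_le_neg (hsub₂ i y hyi))
      yseq
      (fun i y => by
        rw [swap (ps i) (Measure.dirac y) (hpsprob i) inferInstance,
          swap (ps i) (Measure.dirac (yseq i)) (hpsprob i) inferInstance]
        exact neg_le_neg (hy i y))
      hYrec φ hφ qstar pstar inferInstance inferInstance hqconv hpconv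
    intro y
    have h1 := key y
    rw [swap pstar (Measure.dirac y) inferInstance inferInstance,
      swap pstar qstar inferInstance inferInstance] at h1
    linarith
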